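/- Let k be an algebraically closed field of characteristic 3 and let i ∈ k satisfy i² = −1. There exist polynomials b₄, b₆ ∈ k[t] with deg b₄ ≤ 4 and deg b₆ ≤ 6 such that, with b₂ = t, the discriminant Δ = −b₂²(b₂b₆ − b₄²) + b₄³ equals t¹² + t¹⁰ − t⁸ + t⁶ − t⁴ + t² + 1 = (t − 1)⁴(t + 1)⁴(t² + 1)². Moreover the roots of this polynomial are exactly 1 and −1, each with multiplicity 4, and i and −i, each with multiplicity 2; these four roots are distinct and nonzero. (This realizes the configuration I₄² I₂² of multiplicative fibres on a rational elliptic surface in characteristic 3; this configuration exists in characteristic 3 but not in characteristic 2.) -/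
import Mathlib


open Polynomial

theorem stmt16 {k : Type*} [Field k] [IsAlgClosed k] [CharP k 3]
    (i : k) (hi : i ^ 2 = -1)
    (D : k[X]) (hD : D = X ^ 12 + X ^ 10 - X ^ 8 + X ^ 6 - X ^ 4 + X ^ 2 + 1) :
    (∃ b₄ b₆ : k[X], b₄.degree ≤ 4 ∧ b₆.degree ≤ 6 ∧
      -(X : k[X]) ^ 2 * (X * b₆ - b₄ ^ 2) + b₄ ^ 3 = D) ∧
    D = (X - 1) ^ 4 * (X + 1) ^ 4 * (X ^ 2 + 1) ^ 2 ∧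
    (∀ x : k, D.eval x = 0 ↔ x = 1 ∨ x = -1 ∨ x = i ∨ x = -i) ∧
    D.rootMultiplicity 1 = 4 ∧ D.rootMultiplicity (-1) = 4 ∧
    D.rootMultiplicity i = 2 ∧ D.rootMultiplicity (-i) = 2 ∧
    ([1, -1, i, -i] : List k).Nodup ∧
    (∀ x ∈ ([1, -1, i, -i] : List k), x ≠ 0) := by
  have h3 : (3 : k[X]) = 0 := by
    have : ((3 : ℕ) : k[X]) = 0 := by
      rw [← Polynomial.C_eq_natCast, CharP.cast_eq_zero k 3, Polynomial.C_0]
    simpa using this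
  have h3k : (3 : k) = 0 := CharP.cast_eq_zero k 3
  have h2k : (2 : k) ≠ 0 := by
    intro h
    have : (1 : k) = 0 := by linear_combination h3k - h
    exact one_ne_zero this
  have hne11 : (1 : k) ≠ -1 := by
    intro h; apply h2k; linear_combination h
  have hiz : i ≠ 0 := fun h => hne11 (by rw [h] at hi; linear_combination 2 * hi)
  have h1i : (1 : k) ≠ i := by
    intro h; rw [← h] at hi; apply hne11; linear_combination hi
  have h1ni : (1 : k) ≠ -i := by
    intro h
    have : i = -1 := by linear_combination h
    rw [this] at hi; apply hne11; linear_combination hi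
  have hn1i : (-1 : k) ≠ i := fun h => h1ni (by rw [← h]; ring)
  have hn1ni : (-1 : k) ≠ -i := fun h => h1i (by linear_combination -h)
  have hini : i ≠ -i := by
    intro h
    have : (2 : k) * i = 0 := by linear_combination h
    rcases mul_eq_zero.mp this with h' | h'
    · exact h2k h'
    · exact hiz h'
  -- factorization
  have hfac : D = (X - 1) ^ 4 * (X + 1) ^ 4 * ((X : k[X]) ^ 2 + 1) ^ 2 := by
    rw [hD]
    linear_combination ((X : k[X]) ^ 10 - X ^ 6 + X ^ 2) * h3
  have hDne : D ≠ 0 := by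
    intro h
    have := congrArg (Polynomial.eval 0) h
    rw [hD] at this; simp at this
  constructor
  · refine ⟨X ^ 4 + 1, X ^ 5 + X ^ 3 + X, ?_, ?_, ?_⟩
    · apply le_trans (Polynomial.degree_add_le _ _)
      simp [Polynomial.degree_X_pow]
    · apply le_trans (Polynomial.degree_add_le _ _)
      apply max_le
      · apply le_trans (Polynomial.degree_add_le _ _)
        apply max_le
        · rw [Polynomial.degree_X_pow]; decide
        · rw [Polynomial.degree_X_pow]; decide
      · simpa using Polynomial.degree_X_le.trans (by norm_num)
    · rw [hD]
      linear_combination ((X : k[X]) ^ 8 + X ^ 4) * h3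
  refine ⟨hfac, ?_, ?_⟩
  · intro x
    rw [hfac]
    simp only [Polynomial.eval_mul, Polynomial.eval_pow, Polynomial.eval_add,
      Polynomial.eval_sub, Polynomial.eval_one, Polynomial.eval_X]
    rw [mul_eq_zero, mul_eq_zero, pow_eq_zero_iff (by norm_num : 4 ≠ 0),
      pow_eq_zero_iff (by norm_num : 4 ≠ 0), pow_eq_zero_iff (by norm_num : 2 ≠ 0)]
    constructor
    · rintro ((h | h) | h)
      · left; linear_combination h
      · right; left; linear_combination h
      · have : (x - i) * (x + i) = 0 := by linear_combination h - hi
        rcases mul_eq_zero.mp this with h' | h'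
        · right; right; left; linear_combination h'
        · right; right; right; linear_combination h'
    · rintro (h | h | h | h) <;> subst h
      · left; left; ring
      · left; right; ring
      · right; linear_combination hi
      · right; linear_combination hi
  -- root multiplicities
  have key : ∀ a : k, D.rootMultiplicity a =
      rootMultiplicity a ((X - 1 : k[X]) ^ 4) + rootMultiplicity a ((X + 1 : k[X]) ^ 4)
      + rootMultiplicity a (((X : k[X]) ^ 2 + 1) ^ 2) := by
    intro a
    rw [hfac] at hDne ⊢
    rw [Polynomial.rootMultiplicity_mul hDne,
      Polynomial.rootMultiplicity_mul (mul_ne_zero_iff.mp hDne).1]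
  have hX1 : ((X - 1 : k[X])) = X - C 1 := by simp
  have hX2 : ((X + 1 : k[X])) = X - C (-1) := by simp
  have hQ : ((X : k[X]) ^ 2 + 1) = (X - C i) * (X - C (-i)) := by
    simp only [Polynomial.C_neg]
    have hiC : (C i : k[X]) ^ 2 = -1 := by
      rw [← Polynomial.C_pow, hi]; simp
    linear_combination hiC
  have hnr : ∀ (a b : k) (n : ℕ), a ≠ b → rootMultiplicity a ((X - C b : k[X]) ^ n) = 0 := by
    intro a b n hab
    apply Polynomial.rootMultiplicity_eq_zero
    simp [Polynomial.IsRoot, sub_eq_zero, hab]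
  have hQ2 : (((X : k[X]) ^ 2 + 1) ^ 2) = (X - C i) ^ 2 * (X - C (-i)) ^ 2 := by
    rw [hQ]; ring
  have hQne : ((X - C i : k[X]) ^ 2 * (X - C (-i)) ^ 2) ≠ 0 :=
    mul_ne_zero (pow_ne_zero _ (Polynomial.X_sub_C_ne_zero _))
      (pow_ne_zero _ (Polynomial.X_sub_C_ne_zero _))
  have hrmQ : ∀ a : k, rootMultiplicity a (((X : k[X]) ^ 2 + 1) ^ 2) =
      rootMultiplicity a ((X - C i : k[X]) ^ 2) + rootMultiplicity a ((X - C (-i) : k[X]) ^ 2) := by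
    intro a
    rw [hQ2, Polynomial.rootMultiplicity_mul hQne]
  refine ⟨?_, ?_, ?_, ?_, ?_, ?_⟩
  · rw [key, hX1, hX2, hrmQ, Polynomial.rootMultiplicity_X_sub_C_pow,
      hnr 1 (-1) 4 hne11, hnr 1 i 2 h1i, hnr 1 (-i) 2 h1ni]
  · rw [key, hX1, hX2, hrmQ, Polynomial.rootMultiplicity_X_sub_C_pow,
      hnr (-1) 1 4 (Ne.symm hne11), hnr (-1) i 2 hn1i, hnr (-1) (-i) 2 hn1ni]
  · rw [key, hX1, hX2, hrmQ, Polynomial.rootMultiplicity_X_sub_C_pow,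
      hnr i 1 4 (Ne.symm h1i), hnr i (-1) 4 (Ne.symm hn1i), hnr i (-i) 2 hini]
  · rw [key, hX1, hX2, hrmQ, Polynomial.rootMultiplicity_X_sub_C_pow,
      hnr (-i) 1 4 (Ne.symm h1ni), hnr (-i) (-1) 4 (Ne.symm hn1ni), hnr (-i) i 2 (Ne.symm hini)]
  · simp [List.nodup_cons, hne11, h1i, h1ni, hn1i, hn1ni, hini]
  · intro x hx
    simp only [List.mem_cons, List.mem_singleton, List.not_mem_nil, or_false] at hx
    rcases hx with h | h | h | h <;> subst h
    · exact one_ne_zero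
    · exact neg_ne_zero.mpr one_ne_zero
    · exact hiz
    · exact neg_ne_zero.mpr hiz
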